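/- Let A, B, C : [0,∞) → ℝ be differentiable with A(t), B(t), C(t) > 0, satisfying A' = 4(C² − A²)/(BC), B' = 4(A + C)²/(AC), and C' = 4(A² − C²)/(AB). Then ((A + C)/B)'(t) = −8·(A³ + A²C + AC² + C³)/(A·B²·C) < 0 for all t; in particular (A + C)/B is strictly decreasing on [0,∞), and moreover (A(t) + C(t))/B(t) → 0 as t → ∞. -/

import Mathlib

open Filter Set

/-- Ricci flow ODE on the Lie group `Isom(ℝ¹₁)`: the quantity `(A + C)/B` satisfies
`((A+C)/B)' = -8(A³ + A²C + AC² + C³)/(AB²C) < 0`, is strictly decreasing on `[0,∞)`,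
and tends to `0` as `t → ∞`. -/
theorem isomMinkowski_ratio_decreasing (A B C : ℝ → ℝ)
    (hA : ∀ t : ℝ, 0 ≤ t → 0 < A t)
    (hB : ∀ t : ℝ, 0 ≤ t → 0 < B t)
    (hC : ∀ t : ℝ, 0 ≤ t → 0 < C t)
    (hA' : ∀ t : ℝ, 0 ≤ t →
      HasDerivAt A (4 * ((C t) ^ 2 - (A t) ^ 2) / (B t * C t)) t)
    (hB' : ∀ t : ℝ, 0 ≤ t →
      HasDerivAt B (4 * (A t + C t) ^ 2 / (A t * C t)) t)
    (hC' : ∀ t : ℝ, 0 ≤ t →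
      HasDerivAt C (4 * ((A t) ^ 2 - (C t) ^ 2) / (A t * B t)) t) :
    (∀ t : ℝ, 0 ≤ t →
      HasDerivAt (fun s => (A s + C s) / B s)
        (-8 * ((A t) ^ 3 + (A t) ^ 2 * C t + A t * (C t) ^ 2 + (C t) ^ 3)
          / (A t * (B t) ^ 2 * C t)) t) ∧
    (∀ t : ℝ, 0 ≤ t →
      -8 * ((A t) ^ 3 + (A t) ^ 2 * C t + A t * (C t) ^ 2 + (C t) ^ 3)
        / (A t * (B t) ^ 2 * C t) < 0) ∧
    StrictAntiOn (fun t => (A t + C t) / B t) (Set.Ici 0) ∧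
    Tendsto (fun t => (A t + C t) / B t) atTop (nhds 0) := by
  -- derivative of f = (A+C)/B
  have hf : ∀ t : ℝ, 0 ≤ t →
      HasDerivAt (fun s => (A s + C s) / B s)
        (-8 * ((A t) ^ 3 + (A t) ^ 2 * C t + A t * (C t) ^ 2 + (C t) ^ 3)
          / (A t * (B t) ^ 2 * C t)) t := by
    intro t ht
    have hAt := (hA t ht).ne'
    have hBt := (hB t ht).ne'
    have hCt := (hC t ht).ne'
    have h := ((hA' t ht).add (hC' t ht)).div (hB' t ht) hBt
    refine h.congr_deriv ?_
    simp only [Pi.add_apply]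
    field_simp
    ring
  have hneg : ∀ t : ℝ, 0 ≤ t →
      -8 * ((A t) ^ 3 + (A t) ^ 2 * C t + A t * (C t) ^ 2 + (C t) ^ 3)
        / (A t * (B t) ^ 2 * C t) < 0 := by
    intro t ht
    have hAt := hA t ht; have hBt := hB t ht; have hCt := hC t ht
    apply div_neg_of_neg_of_pos
    · nlinarith [pow_pos hAt 3, pow_pos hCt 3, sq_nonneg (A t), sq_nonneg (C t),
        mul_pos (mul_pos hAt hAt) hCt, mul_pos hAt (mul_pos hCt hCt)]
    · positivity
  have hanti : StrictAntiOn (fun t => (A t + C t) / B t) (Set.Ici 0) := by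
    apply strictAntiOn_of_deriv_neg (convex_Ici 0)
    · intro t ht
      exact (hf t ht).continuousAt.continuousWithinAt
    · intro t ht
      rw [interior_Ici] at ht
      rw [(hf t ht.le).deriv]
      exact hneg t ht.le
  refine ⟨hf, hneg, hanti, ?_⟩
  -- Tendsto part
  set S : ℝ := A 0 + C 0 with hS
  have hSpos : 0 < S := add_pos (hA 0 le_rfl) (hC 0 le_rfl)
  -- A + C is nonincreasing
  have hsum' : ∀ t : ℝ, 0 ≤ t → HasDerivAt (fun s => A s + C s)
      (4 * ((C t) ^ 2 - (A t) ^ 2) / (B t * C t)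
        + 4 * ((A t) ^ 2 - (C t) ^ 2) / (A t * B t)) t :=
    fun t ht => (hA' t ht).add (hC' t ht)
  have hsum_le : ∀ t : ℝ, 0 ≤ t → A t + C t ≤ S := by
    intro t ht
    have := antitoneOn_of_deriv_nonpos (convex_Ici 0)
      (f := fun s => A s + C s)
      (fun s hs => (hsum' s hs).continuousAt.continuousWithinAt)
      (fun s hs => by
        rw [interior_Ici] at hs
        exact (hsum' s hs.le).differentiableAt.differentiableWithinAt)
      (fun s hs => by
        rw [interior_Ici] at hs
        rw [(hsum' s hs.le).deriv]
        have hAs := hA s hs.le; have hBs := hB s hs.le; have hCs := hC s hs.le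
        have key : 4 * ((C s) ^ 2 - (A s) ^ 2) / (B s * C s)
            + 4 * ((A s) ^ 2 - (C s) ^ 2) / (A s * B s)
            = -4 * (C s - A s) ^ 2 * (A s + C s) / (A s * B s * C s) := by
          field_simp
          ring
        rw [key]
        apply div_nonpos_of_nonpos_of_nonneg
        · nlinarith [sq_nonneg (C s - A s)]
        · positivity)
      (self_mem_Ici) (mem_Ici.mpr ht) ht
    simpa using this
  -- derivative of g = B/(A+C)
  set m : ℝ := 16 / S with hm
  have hmpos : 0 < m := by positivity
  have hg : ∀ t : ℝ, 0 ≤ t → HasDerivAt (fun s => B s / (A s + C s))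
      ((4 * (A t + C t) ^ 2 / (A t * C t) * (A t + C t)
        - B t * (4 * ((C t) ^ 2 - (A t) ^ 2) / (B t * C t)
          + 4 * ((A t) ^ 2 - (C t) ^ 2) / (A t * B t))) / (A t + C t) ^ 2) t := by
    intro t ht
    exact (hB' t ht).div (hsum' t ht) (add_pos (hA t ht) (hC t ht)).ne'
  have hg_ge : ∀ t : ℝ, 0 ≤ t →
      m ≤ (4 * (A t + C t) ^ 2 / (A t * C t) * (A t + C t)
        - B t * (4 * ((C t) ^ 2 - (A t) ^ 2) / (B t * C t)
          + 4 * ((A t) ^ 2 - (C t) ^ 2) / (A t * B t))) / (A t + C t) ^ 2 := by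
    intro t ht
    have hAt := hA t ht; have hBt := hB t ht; have hCt := hC t ht
    have hsum := hsum_le t ht
    have key : (4 * (A t + C t) ^ 2 / (A t * C t) * (A t + C t)
        - B t * (4 * ((C t) ^ 2 - (A t) ^ 2) / (B t * C t)
          + 4 * ((A t) ^ 2 - (C t) ^ 2) / (A t * B t))) / (A t + C t) ^ 2
        = 8 * ((A t) ^ 2 + (C t) ^ 2) / (A t * C t * (A t + C t)) := by
      have h1 := hAt.ne'; have h2 := hBt.ne'; have h3 := hCt.ne'
      have h4 := (add_pos hAt hCt).ne'
      field_simp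
      ring
    rw [key, hm, div_le_div_iff₀ hSpos (by positivity)]
    nlinarith [sq_nonneg (A t - C t), mul_pos (mul_pos hAt hCt) (add_pos hAt hCt),
      mul_pos hAt hCt]
  -- g grows at least linearly
  have hgrow : ∀ t : ℝ, 0 ≤ t →
      m * t ≤ B t / (A t + C t) - B 0 / (A 0 + C 0) := by
    intro t ht
    have := Convex.mul_sub_le_image_sub_of_le_deriv (convex_Ici 0)
      (f := fun s => B s / (A s + C s))
      (fun s hs => (hg s hs).continuousAt.continuousWithinAt)
      (fun s hs => by
        rw [interior_Ici] at hs
        exact (hg s hs.le).differentiableAt.differentiableWithinAt)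
      (C := m)
      (fun s hs => by
        rw [interior_Ici] at hs
        rw [(hg s hs.le).deriv]
        exact hg_ge s hs.le)
      0 self_mem_Ici t (mem_Ici.mpr ht) ht
    simpa using this
  set g0 : ℝ := B 0 / (A 0 + C 0) with hg0
  have hg0pos : 0 < g0 := div_pos (hB 0 le_rfl) hSpos
  have hbound : ∀ t : ℝ, 0 ≤ t →
      (A t + C t) / B t ≤ 1 / (g0 + m * t) := by
    intro t ht
    have hAt := hA t ht; have hBt := hB t ht; have hCt := hC t ht
    have hgt : g0 + m * t ≤ B t / (A t + C t) := by
      have := hgrow t ht; linarith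
    have hdenpos : 0 < g0 + m * t := by positivity
    have hft : (A t + C t) / B t = 1 / (B t / (A t + C t)) := by
      rw [one_div_div]
    rw [hft]
    exact one_div_le_one_div_of_le hdenpos hgt
  have hfnonneg : ∀ t : ℝ, 0 ≤ t → 0 ≤ (A t + C t) / B t := by
    intro t ht
    exact le_of_lt (div_pos (add_pos (hA t ht) (hC t ht)) (hB t ht))
  have hlim : Tendsto (fun t : ℝ => 1 / (g0 + m * t)) atTop (nhds 0) := by
    have h1 : Tendsto (fun t : ℝ => g0 + m * t) atTop atTop :=
      tendsto_atTop_add_const_left _ g0 (tendsto_id.const_mul_atTop hmpos)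
    simp only [one_div]
    exact h1.inv_tendsto_atTop
  refine squeeze_zero' ?_ ?_ hlim
  · filter_upwards [eventually_ge_atTop (0:ℝ)] with t ht using hfnonneg t ht
  · filter_upwards [eventually_ge_atTop (0:ℝ)] with t ht using hbound t ht
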